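/- For finite simple graphs G and H, the number of triangles in inflate(G,H) equals |G|·T(H) + 2·e(G)·e(H)·|H| + T(G)·|H|³, where T denotes the number of triangles (3-cliques) and e the number of edges. -/

import Mathlib

open scoped Classical

/-- The inflation (lexicographic product) of `G` with `H`: vertex set `α × β`,
with `(g₁,h₁) ~ (g₂,h₂)` iff `g₁ ~ g₂` in `G`, or `g₁ = g₂` and `h₁ ~ h₂` in `H`. -/
def inflate {α β : Type*} (G : SimpleGraph α) (H : SimpleGraph β) :
    SimpleGraph (α × β) where
  Adj p q := G.Adj p.1 q.1 ∨ (p.1 = q.1 ∧ H.Adj p.2 q.2)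
  symm := by
    constructor
    rintro p q (h | ⟨h1, h2⟩)
    · exact Or.inl h.symm
    · exact Or.inr ⟨h1.symm, h2.symm⟩
  loopless := by
    constructor
    rintro p (h | ⟨-, h⟩)
    · exact G.irrefl h
    · exact H.irrefl h

/-- The number of edges of a graph. -/
noncomputable def edgeCount {V : Type*} (G : SimpleGraph V) : ℕ :=
  Nat.card G.edgeSet

/-- Twice the number of edges of `G` inside the vertex subset `s`
(counting ordered adjacent pairs). -/
noncomputable def edgePairsIn {V : Type*} [Fintype V] (G : SimpleGraph V)
    (s : Finset V) : ℕ :=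
  ((s ×ˢ s).filter fun p => G.Adj p.1 p.2).card

/-- The number of 3-element vertex subsets of `G` whose induced subgraph has
exactly `j` edges. -/
noncomputable def tripleCount {V : Type*} [Fintype V] (G : SimpleGraph V) (j : ℕ) : ℕ :=
  ((Finset.powersetCard 3 (Finset.univ : Finset V)).filter
    fun s => edgePairsIn G s = 2 * j).card

open Finset

/-- ordered triangles -/
noncomputable def triFinset {V : Type*} [Fintype V] (G : SimpleGraph V) :
    Finset (V × V × V) :=
  univ.filter fun t => G.Adj t.1 t.2.1 ∧ G.Adj t.1 t.2.2 ∧ G.Adj t.2.1 t.2.2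

/-- ordered adjacent pairs -/
noncomputable def pairFinset {V : Type*} [Fintype V] (G : SimpleGraph V) :
    Finset (V × V) :=
  univ.filter fun p => G.Adj p.1 p.2

lemma inflate_adj {α β : Type*} (G : SimpleGraph α) (H : SimpleGraph β)
    (p q : α × β) : (inflate G H).Adj p q ↔
      (G.Adj p.1 q.1 ∨ (p.1 = q.1 ∧ H.Adj p.2 q.2)) := Iff.rfl

lemma pairFinset_card {V : Type*} [Fintype V] (G : SimpleGraph V) :
    (pairFinset G).card = 2 * edgeCount G := by
  classical
  have h1 : edgeCount G = G.edgeFinset.card := by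
    rw [edgeCount, Nat.card_eq_fintype_card, SimpleGraph.edgeFinset_card]
  have h2 : ∀ v, ((pairFinset G).filter fun p => p.1 = v) = {v} ×ˢ G.neighborFinset v := by
    intro v
    ext ⟨a, b⟩
    simp only [pairFinset, mem_filter, mem_product, mem_univ, true_and, mem_singleton,
      SimpleGraph.mem_neighborFinset]
    constructor
    · rintro ⟨hadj, rfl⟩; exact ⟨rfl, hadj⟩
    · rintro ⟨rfl, hadj⟩; exact ⟨hadj, rfl⟩
  have h3 := Finset.card_eq_sum_card_fiberwise
    (f := Prod.fst) (s := pairFinset G) (t := univ) (fun x _ => mem_univ _)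
  rw [h3]
  have h4 : ∀ v : V, ((pairFinset G).filter fun p => Prod.fst p = v).card = G.degree v := by
    intro v
    rw [show ((pairFinset G).filter fun p => Prod.fst p = v) =
      (pairFinset G).filter fun p => p.1 = v from rfl, h2, Finset.card_product,
      Finset.card_singleton, one_mul, SimpleGraph.card_neighborFinset_eq_degree]
  simp only [h4]
  rw [SimpleGraph.sum_degrees_eq_twice_card_edges, h1]

lemma edgePairsIn_six {V : Type*} [Fintype V] (G : SimpleGraph V) (s : Finset V)
    (hs : s.card = 3) : edgePairsIn G s = 6 ↔ ((s : Set V).Pairwise G.Adj) := by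
  classical
  have hsub : ((s ×ˢ s).filter fun p => G.Adj p.1 p.2) ⊆ s.offDiag := by
    intro p hp
    simp only [mem_filter, mem_product] at hp
    exact mem_offDiag.2 ⟨hp.1.1, hp.1.2, hp.2.ne⟩
  have hoff : s.offDiag.card = 6 := by rw [Finset.offDiag_card, hs]
  constructor
  · intro h x hx y hy hxy
    have heq : ((s ×ˢ s).filter fun p => G.Adj p.1 p.2) = s.offDiag :=
      Finset.eq_of_subset_of_card_le hsub (by rw [hoff]; exact le_of_eq h.symm)
    have : (x, y) ∈ s.offDiag := mem_offDiag.2 ⟨hx, hy, hxy⟩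
    rw [← heq, mem_filter] at this
    exact this.2
  · intro h
    have heq : ((s ×ˢ s).filter fun p => G.Adj p.1 p.2) = s.offDiag := by
      refine Finset.Subset.antisymm hsub fun p hp => ?_
      rw [mem_offDiag] at hp
      exact mem_filter.2 ⟨mem_product.2 ⟨hp.1, hp.2.1⟩, h hp.1 hp.2.1 hp.2.2⟩
    rw [edgePairsIn, heq, hoff]

set_option maxHeartbeats 1600000 in
lemma triFinset_card {V : Type*} [Fintype V] (G : SimpleGraph V) :
    (triFinset G).card = 6 * tripleCount G 3 := by
  classical
  set T := (Finset.powersetCard 3 (univ : Finset V)).filter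
    (fun s => edgePairsIn G s = 2 * 3) with hT
  have htc : tripleCount G 3 = T.card := rfl
  have hmem : ∀ t ∈ triFinset G, ({t.1, t.2.1, t.2.2} : Finset V) ∈ T := by
    rintro ⟨a, b, c⟩ ht
    simp only [triFinset, mem_filter, mem_univ, true_and] at ht
    obtain ⟨hab, hac, hbc⟩ := ht
    have hcard : ({a, b, c} : Finset V).card = 3 := by
      rw [card_insert_of_notMem (by simp [hab.ne, hac.ne]),
        card_insert_of_notMem (by simp [hbc.ne]), card_singleton]
    refine mem_filter.2 ⟨mem_powersetCard_univ.2 hcard, ?_⟩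
    rw [show (2 * 3 : ℕ) = 6 from rfl, edgePairsIn_six G _ hcard]
    intro x hx y hy hxy
    simp only [coe_insert, Set.mem_insert_iff, coe_singleton, Set.mem_singleton_iff] at hx hy
    rcases hx with rfl | rfl | rfl <;> rcases hy with rfl | rfl | rfl <;>
      first
        | exact absurd rfl hxy
        | exact hab | exact hac | exact hbc
        | exact hab.symm | exact hac.symm | exact hbc.symm
  have hfib : ∀ s ∈ T,
      ((triFinset G).filter fun t => ({t.1, t.2.1, t.2.2} : Finset V) = s).card = 6 := by
    intro s hs
    obtain ⟨hs3, hpairs⟩ := mem_filter.1 hs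
    have hs3' : s.card = 3 := mem_powersetCard_univ.1 hs3
    have hpair : (s : Set V).Pairwise G.Adj :=
      (edgePairsIn_six G s hs3').1 (by omega)
    obtain ⟨a, b, c, hab', hac', hbc', rfl⟩ := Finset.card_eq_three.1 hs3'
    have hAab : G.Adj a b := hpair (by simp) (by simp) hab'
    have hAac : G.Adj a c := hpair (by simp) (by simp) hac'
    have hAbc : G.Adj b c := hpair (by simp) (by simp) hbc'
    have hLeq : ((triFinset G).filter fun t => ({t.1, t.2.1, t.2.2} : Finset V) = {a, b, c}) =
        ({(a, b, c), (a, c, b), (b, a, c), (b, c, a), (c, a, b), (c, b, a)} :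
          Finset (V × V × V)) := by
      ext ⟨x, y, z⟩
      simp only [mem_filter, triFinset, mem_univ, true_and, mem_insert, mem_singleton,
        Prod.mk.injEq]
      constructor
      · rintro ⟨⟨hxy, hxz, hyz⟩, hset⟩
        have hx : x ∈ ({a, b, c} : Finset V) := hset ▸ (by simp)
        have hy : y ∈ ({a, b, c} : Finset V) := hset ▸ (by simp)
        have hz : z ∈ ({a, b, c} : Finset V) := hset ▸ (by simp)
        have h1 : x ≠ y := hxy.ne
        have h2 : x ≠ z := hxz.ne
        have h3 : y ≠ z := hyz.ne
        simp only [mem_insert, mem_singleton] at hx hy hz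
        rcases hx with rfl | rfl | rfl <;> rcases hy with rfl | rfl | rfl <;>
          rcases hz with rfl | rfl | rfl <;>
          first
            | exact absurd rfl h1
            | exact absurd rfl h2
            | exact absurd rfl h3
            | simp
      · intro h
        rcases h with ⟨rfl, rfl, rfl⟩ | ⟨rfl, rfl, rfl⟩ | ⟨rfl, rfl, rfl⟩ |
          ⟨rfl, rfl, rfl⟩ | ⟨rfl, rfl, rfl⟩ | ⟨rfl, rfl, rfl⟩ <;>
          refine ⟨⟨?_, ?_, ?_⟩, ?_⟩ <;>
          first
            | exact hAab | exact hAac | exact hAbc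
            | exact hAab.symm | exact hAac.symm | exact hAbc.symm
            | (ext w; simp only [mem_insert, mem_singleton]; try tauto)
    rw [hLeq]
    rw [card_insert_of_notMem (by simp [Prod.ext_iff, hab', hac', hbc', hab'.symm,
        hac'.symm, hbc'.symm]),
      card_insert_of_notMem (by simp [Prod.ext_iff, hab', hac', hbc', hab'.symm,
        hac'.symm, hbc'.symm]),
      card_insert_of_notMem (by simp [Prod.ext_iff, hab', hac', hbc', hab'.symm,
        hac'.symm, hbc'.symm]),
      card_insert_of_notMem (by simp [Prod.ext_iff, hab', hac', hbc', hab'.symm,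
        hac'.symm, hbc'.symm]),
      card_insert_of_notMem (by simp [Prod.ext_iff, hab', hac', hbc', hab'.symm,
        hac'.symm, hbc'.symm]),
      card_singleton]
  rw [Finset.card_eq_sum_card_fiberwise hmem, Finset.sum_congr rfl hfib, Finset.sum_const,
    smul_eq_mul, htc, mul_comm]

lemma tri_inflate {α β : Type*} [Fintype α] [Fintype β]
    (G : SimpleGraph α) (H : SimpleGraph β) :
    (triFinset (inflate G H)).card =
      Fintype.card α * (triFinset H).card +
        3 * ((pairFinset G).card * ((pairFinset H).card * Fintype.card β)) +
        (triFinset G).card * (Fintype.card β) ^ 3 := by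
  classical
  set S := triFinset (inflate G H) with hS
  set q1 : (α × β) × (α × β) × (α × β) → Prop := fun t => t.1.1 = t.2.1.1 with hq1def
  set q2 : (α × β) × (α × β) × (α × β) → Prop := fun t => t.1.1 = t.2.2.1 with hq2def
  set q3 : (α × β) × (α × β) × (α × β) → Prop := fun t => t.2.1.1 = t.2.2.1 with hq3def
  have split1 := card_filter_add_card_filter_not (s := S) q1
  have split2 := card_filter_add_card_filter_not (s := S.filter q1) q2
  have split3 := card_filter_add_card_filter_not (s := S.filter fun t => ¬ q1 t) q2
  have split4 := card_filter_add_card_filter_not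
    (s := (S.filter fun t => ¬ q1 t).filter fun t => ¬ q2 t) q3
  -- Case A : all three first coordinates equal
  have hA : ((S.filter q1).filter q2).card = ((univ : Finset α) ×ˢ triFinset H).card := by
    apply card_nbij' (i := fun t => (t.1.1, (t.1.2, t.2.1.2, t.2.2.2)))
      (j := fun p => ((p.1, p.2.1), (p.1, p.2.2.1), (p.1, p.2.2.2)))
    · rintro ⟨⟨a, x⟩, ⟨b, y⟩, ⟨c, z⟩⟩ ht
      simp only [mem_coe, hS, hq1def, hq2def, mem_filter, triFinset, mem_univ, true_and,
        inflate_adj] at ht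
      obtain ⟨⟨⟨h12, h13, h23⟩, hq1⟩, hq2⟩ := ht
      dsimp only at hq1 hq2 ⊢
      subst hq1; subst hq2
      simp only [mem_coe, mem_product, mem_univ, true_and, triFinset, mem_filter]
      refine ⟨?_, ?_, ?_⟩
      · rcases h12 with h | h
        · exact absurd h (G.loopless.irrefl a)
        · exact h.2
      · rcases h13 with h | h
        · exact absurd h (G.loopless.irrefl a)
        · exact h.2
      · rcases h23 with h | h
        · exact absurd h (G.loopless.irrefl a)
        · exact h.2
    · rintro ⟨a, x, y, z⟩ hp
      simp only [mem_coe, mem_product, mem_univ, true_and, triFinset, mem_filter] at hp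
      obtain ⟨hxy, hxz, hyz⟩ := hp
      have tmem : ((a, x), (a, y), (a, z)) ∈ S := by
        simp only [mem_coe, hS, triFinset, mem_filter, mem_univ, true_and]
        exact ⟨(inflate_adj G H _ _).mpr (Or.inr ⟨rfl, hxy⟩),
          (inflate_adj G H _ _).mpr (Or.inr ⟨rfl, hxz⟩),
          (inflate_adj G H _ _).mpr (Or.inr ⟨rfl, hyz⟩)⟩
      exact mem_filter.2 ⟨mem_filter.2 ⟨tmem, rfl⟩, rfl⟩
    · rintro ⟨⟨a, x⟩, ⟨b, y⟩, ⟨c, z⟩⟩ ht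
      simp only [mem_coe, hq1def, hq2def, mem_filter] at ht
      obtain ⟨⟨_, hq1⟩, hq2⟩ := ht
      dsimp only at hq1 hq2 ⊢
      subst hq1; subst hq2; rfl
    · rintro ⟨a, x, y, z⟩ _; rfl
  -- Case B1 : first = second ≠ third
  have hB1 : ((S.filter q1).filter fun t => ¬ q2 t).card =
      (pairFinset G ×ˢ pairFinset H ×ˢ (univ : Finset β)).card := by
    apply card_nbij' (i := fun t => ((t.1.1, t.2.2.1), ((t.1.2, t.2.1.2), t.2.2.2)))
      (j := fun p => ((p.1.1, p.2.1.1), (p.1.1, p.2.1.2), (p.1.2, p.2.2)))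
    · rintro ⟨⟨a, x⟩, ⟨b, y⟩, ⟨c, z⟩⟩ ht
      simp only [mem_coe, hS, hq1def, hq2def, mem_filter, triFinset, mem_univ, true_and,
        inflate_adj] at ht
      obtain ⟨⟨⟨h12, h13, h23⟩, hq1⟩, hq2⟩ := ht
      dsimp only at hq1 hq2 ⊢
      subst hq1
      simp only [mem_coe, mem_product, mem_univ, and_true, pairFinset, mem_filter, true_and]
      constructor
      · rcases h13 with h | h
        · exact h
        · exact absurd h.1 hq2
      · rcases h12 with h | h
        · exact absurd h (G.loopless.irrefl a)
        · exact h.2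
    · rintro ⟨⟨a, c⟩, ⟨x, y⟩, z⟩ hp
      simp only [mem_coe, mem_product, mem_univ, and_true, pairFinset, mem_filter, true_and] at hp
      obtain ⟨hac, hxy⟩ := hp
      have tmem : ((a, x), (a, y), (c, z)) ∈ S := by
        simp only [mem_coe, hS, triFinset, mem_filter, mem_univ, true_and]
        exact ⟨(inflate_adj G H _ _).mpr (Or.inr ⟨rfl, hxy⟩),
          (inflate_adj G H _ _).mpr (Or.inl hac),
          (inflate_adj G H _ _).mpr (Or.inl hac)⟩
      exact mem_filter.2 ⟨mem_filter.2 ⟨tmem, rfl⟩, hac.ne⟩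
    · rintro ⟨⟨a, x⟩, ⟨b, y⟩, ⟨c, z⟩⟩ ht
      simp only [mem_coe, hq1def, hq2def, mem_filter] at ht
      obtain ⟨⟨_, hq1⟩, _⟩ := ht
      dsimp only at hq1 ⊢
      subst hq1; rfl
    · rintro ⟨⟨a, c⟩, ⟨x, y⟩, z⟩ _; rfl
  -- Case B2 : first = third ≠ second
  have hB2 : (((S.filter fun t => ¬ q1 t).filter q2)).card =
      (pairFinset G ×ˢ pairFinset H ×ˢ (univ : Finset β)).card := by
    apply card_nbij' (i := fun t => ((t.1.1, t.2.1.1), ((t.1.2, t.2.2.2), t.2.1.2)))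
      (j := fun p => ((p.1.1, p.2.1.1), (p.1.2, p.2.2), (p.1.1, p.2.1.2)))
    · rintro ⟨⟨a, x⟩, ⟨b, y⟩, ⟨c, z⟩⟩ ht
      simp only [mem_coe, hS, hq1def, hq2def, mem_filter, triFinset, mem_univ, true_and,
        inflate_adj] at ht
      obtain ⟨⟨⟨h12, h13, h23⟩, hq1⟩, hq2⟩ := ht
      dsimp only at hq1 hq2 ⊢
      subst hq2
      simp only [mem_coe, mem_product, mem_univ, and_true, pairFinset, mem_filter, true_and]
      constructor
      · rcases h12 with h | h
        · exact h
        · exact absurd h.1 hq1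
      · rcases h13 with h | h
        · exact absurd h (G.loopless.irrefl a)
        · exact h.2
    · rintro ⟨⟨a, b⟩, ⟨x, z⟩, y⟩ hp
      simp only [mem_coe, mem_product, mem_univ, and_true, pairFinset, mem_filter, true_and] at hp
      obtain ⟨hab, hxz⟩ := hp
      have tmem : ((a, x), (b, y), (a, z)) ∈ S := by
        simp only [mem_coe, hS, triFinset, mem_filter, mem_univ, true_and]
        exact ⟨(inflate_adj G H _ _).mpr (Or.inl hab),
          (inflate_adj G H _ _).mpr (Or.inr ⟨rfl, hxz⟩),
          (inflate_adj G H _ _).mpr (Or.inl hab.symm)⟩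
      exact mem_filter.2 ⟨mem_filter.2 ⟨tmem, hab.ne⟩, rfl⟩
    · rintro ⟨⟨a, x⟩, ⟨b, y⟩, ⟨c, z⟩⟩ ht
      simp only [mem_coe, hq1def, hq2def, mem_filter] at ht
      obtain ⟨⟨_, _⟩, hq2⟩ := ht
      dsimp only at hq2 ⊢
      subst hq2; rfl
    · rintro ⟨⟨a, b⟩, ⟨x, z⟩, y⟩ _; rfl
  -- Case B3 : second = third ≠ first
  have hB3 : ((((S.filter fun t => ¬ q1 t).filter fun t => ¬ q2 t).filter q3)).card =
      (pairFinset G ×ˢ pairFinset H ×ˢ (univ : Finset β)).card := by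
    apply card_nbij' (i := fun t => ((t.1.1, t.2.1.1), ((t.2.1.2, t.2.2.2), t.1.2)))
      (j := fun p => ((p.1.1, p.2.2), (p.1.2, p.2.1.1), (p.1.2, p.2.1.2)))
    · rintro ⟨⟨a, x⟩, ⟨b, y⟩, ⟨c, z⟩⟩ ht
      simp only [mem_coe, hS, hq1def, hq2def, hq3def, mem_filter, triFinset, mem_univ, true_and,
        inflate_adj] at ht
      obtain ⟨⟨⟨⟨h12, h13, h23⟩, hq1⟩, hq2⟩, hq3⟩ := ht
      dsimp only at hq1 hq2 hq3 ⊢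
      subst hq3
      simp only [mem_coe, mem_product, mem_univ, and_true, pairFinset, mem_filter, true_and]
      constructor
      · rcases h12 with h | h
        · exact h
        · exact absurd h.1 hq1
      · rcases h23 with h | h
        · exact absurd h (G.loopless.irrefl b)
        · exact h.2
    · rintro ⟨⟨a, b⟩, ⟨y, z⟩, x⟩ hp
      simp only [mem_coe, mem_product, mem_univ, and_true, pairFinset, mem_filter, true_and] at hp
      obtain ⟨hab, hyz⟩ := hp
      have tmem : ((a, x), (b, y), (b, z)) ∈ S := by
        simp only [mem_coe, hS, triFinset, mem_filter, mem_univ, true_and]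
        exact ⟨(inflate_adj G H _ _).mpr (Or.inl hab),
          (inflate_adj G H _ _).mpr (Or.inl hab),
          (inflate_adj G H _ _).mpr (Or.inr ⟨rfl, hyz⟩)⟩
      exact mem_filter.2 ⟨mem_filter.2 ⟨mem_filter.2 ⟨tmem, hab.ne⟩, hab.ne⟩, rfl⟩
    · rintro ⟨⟨a, x⟩, ⟨b, y⟩, ⟨c, z⟩⟩ ht
      simp only [mem_coe, hq1def, hq2def, hq3def, mem_filter] at ht
      obtain ⟨⟨⟨_, _⟩, _⟩, hq3⟩ := ht
      dsimp only at hq3 ⊢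
      subst hq3; rfl
    · rintro ⟨⟨a, b⟩, ⟨y, z⟩, x⟩ _; rfl
  -- Case C : all first coordinates distinct
  have hC : ((((S.filter fun t => ¬ q1 t).filter fun t => ¬ q2 t).filter
      fun t => ¬ q3 t)).card =
      (triFinset G ×ˢ (univ : Finset (β × β × β))).card := by
    apply card_nbij' (i := fun t => ((t.1.1, t.2.1.1, t.2.2.1), (t.1.2, t.2.1.2, t.2.2.2)))
      (j := fun p => ((p.1.1, p.2.1), (p.1.2.1, p.2.2.1), (p.1.2.2, p.2.2.2)))
    · rintro ⟨⟨a, x⟩, ⟨b, y⟩, ⟨c, z⟩⟩ ht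
      simp only [mem_coe, hS, hq1def, hq2def, hq3def, mem_filter, triFinset, mem_univ, true_and,
        inflate_adj] at ht
      obtain ⟨⟨⟨⟨h12, h13, h23⟩, hq1⟩, hq2⟩, hq3⟩ := ht
      dsimp only at hq1 hq2 hq3 ⊢
      simp only [mem_coe, mem_product, mem_univ, and_true, triFinset, mem_filter, true_and]
      refine ⟨?_, ?_, ?_⟩
      · rcases h12 with h | h
        · exact h
        · exact absurd h.1 hq1
      · rcases h13 with h | h
        · exact h
        · exact absurd h.1 hq2
      · rcases h23 with h | h
        · exact h
        · exact absurd h.1 hq3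
    · rintro ⟨⟨a, b, c⟩, ⟨x, y, z⟩⟩ hp
      simp only [mem_coe, mem_product, mem_univ, and_true, triFinset, mem_filter, true_and] at hp
      obtain ⟨hab, hac, hbc⟩ := hp
      have tmem : ((a, x), (b, y), (c, z)) ∈ S := by
        simp only [mem_coe, hS, triFinset, mem_filter, mem_univ, true_and]
        exact ⟨(inflate_adj G H _ _).mpr (Or.inl hab),
          (inflate_adj G H _ _).mpr (Or.inl hac),
          (inflate_adj G H _ _).mpr (Or.inl hbc)⟩
      exact mem_filter.2 ⟨mem_filter.2 ⟨mem_filter.2 ⟨tmem, hab.ne⟩, hac.ne⟩, hbc.ne⟩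
    · rintro ⟨⟨a, x⟩, ⟨b, y⟩, ⟨c, z⟩⟩ _; rfl
    · rintro ⟨⟨a, b, c⟩, ⟨x, y, z⟩⟩ _; rfl
  have hcard1 : ((univ : Finset α) ×ˢ triFinset H).card = Fintype.card α * (triFinset H).card := by
    rw [card_product, card_univ]
  have hcard2 : (pairFinset G ×ˢ pairFinset H ×ˢ (univ : Finset β)).card =
      (pairFinset G).card * ((pairFinset H).card * Fintype.card β) := by
    rw [card_product, card_product, card_univ]
  have hcard3 : (triFinset G ×ˢ (univ : Finset (β × β × β))).card =
      (triFinset G).card * (Fintype.card β) ^ 3 := by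
    rw [card_product, card_univ, Fintype.card_prod, Fintype.card_prod]
    ring
  rw [hA, hB1] at split2
  rw [hB2] at split3
  rw [hB3, hC] at split4
  rw [hcard1, hcard2] at split2
  rw [hcard2] at split3
  rw [hcard2, hcard3] at split4
  omega

/-- The number of triangles in `inflate G H` is
`|G|·T(H) + 2·e(G)·e(H)·|H| + T(G)·|H|³`. -/
theorem stmt11 {α β : Type*} [Fintype α] [Fintype β]
    (G : SimpleGraph α) (H : SimpleGraph β) :
    tripleCount (inflate G H) 3 =
      Fintype.card α * tripleCount H 3 +
        2 * edgeCount G * edgeCount H * Fintype.card β +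
        tripleCount G 3 * (Fintype.card β) ^ 3 := by
  have h := tri_inflate G H
  rw [triFinset_card, triFinset_card, triFinset_card, pairFinset_card, pairFinset_card] at h
  apply Nat.eq_of_mul_eq_mul_left (show 0 < 6 by norm_num)
  rw [h]; ring
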